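/- Fix a graded system of Hilbert spaces with product ∘, and take the weights w₀ = 1 and w_n = 1/n! for n ≥ 1. Then for all elements a, b of the algebra, ‖a ∘ b‖_w ≤ √3·‖a‖_w·‖b‖_w. -/

import Mathlib

/-! A graded system of Hilbert spaces: a family `(E n)_{n ≥ 1}` of real inner product spaces
together with bilinear maps `mul p q : E p →ₗ E q →ₗ E (p+q)`.  An element of the associated
algebra is a pair `(a₀, (a n)_{n ≥ 1})` with `a₀ : ℝ`, `a n : E n`, all but finitely many `a n`
zero (the component `a 0` is unused dead data).  -/

/-- The degree-`n` component (`n ≥ 1`) of the product of the elements `(a₀, a)` and `(b₀, b)`: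
`c n = a₀ • b n + b₀ • a n + ∑_{p+q=n, p,q ≥ 1} a p ∘ b q`. -/
noncomputable def gradedMul {E : ℕ → Type*} [∀ n, NormedAddCommGroup (E n)]
    [∀ n, InnerProductSpace ℝ (E n)]
    (mul : ∀ p q : ℕ, E p →ₗ[ℝ] E q →ₗ[ℝ] E (p + q))
    (a₀ : ℝ) (a : ∀ n, E n) (b₀ : ℝ) (b : ∀ n, E n) (n : ℕ) : E n :=
  a₀ • b n + b₀ • a n +
    ∑ p ∈ Finset.Ioo 0 n,
      if h : p + (n - p) = n then cast (congrArg E h) (mul p (n - p) (a p) (b (n - p))) else 0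

/-- The weighted Hilbert norm `‖a‖_w = √(a₀² + ∑_{n ≥ 1} w n · ‖a n‖²)` (the weight `w 0 = 1`
of the scalar component is built in). -/
noncomputable def wnorm {E : ℕ → Type*} [∀ n, NormedAddCommGroup (E n)]
    (w : ℕ → ℝ) (a₀ : ℝ) (a : ∀ n, E n) : ℝ :=
  Real.sqrt (a₀ ^ 2 + ∑' n : ℕ, w (n + 1) * ‖a (n + 1)‖ ^ 2)


open Finset

lemma castE_norm {E : ℕ → Type*} [∀ n, NormedAddCommGroup (E n)] {m n : ℕ} (h : m = n)
    (x : E m) : ‖cast (congrArg E h) x‖ = ‖x‖ := by subst h; rfl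

lemma castE_zero {E : ℕ → Type*} [∀ n, NormedAddCommGroup (E n)] {m n : ℕ} (h : m = n) :
    cast (congrArg E h) (0 : E m) = 0 := by subst h; rfl

lemma range_split (n : ℕ) (hn : 0 < n) :
    range (n + 1) = insert 0 (insert n (Ioo 0 n)) := by
  ext x
  simp [Finset.mem_Ioo, Finset.mem_range]
  omega

lemma choose_lower : ∀ n p : ℕ, 0 < p → p < n → n ≤ n.choose p := by
  intro n
  induction n with
  | zero => omega
  | succ m ih =>
    intro p h1 h2
    rcases Nat.lt_or_ge p m with hp | hp
    · obtain ⟨k, rfl⟩ : ∃ k, p = k + 1 := ⟨p - 1, by omega⟩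
      rw [Nat.choose_succ_succ]
      have h3 : m ≤ m.choose (k + 1) := ih (k + 1) h1 hp
      have h4 : 0 < m.choose k := Nat.choose_pos (by omega)
      simp only [Nat.succ_eq_add_one]
      omega
    · have hpm : p = m := by omega
      subst hpm
      have h5 : (p + 1).choose ((p + 1) - 1) = (p + 1).choose 1 := Nat.choose_symm (by omega)
      simp only [Nat.add_sub_cancel, Nat.choose_one_right] at h5
      omega

lemma factSum (n : ℕ) : ∑ p ∈ range (n + 1), p.factorial * (n - p).factorial
    ≤ 3 * n.factorial := by
  rcases Nat.eq_zero_or_pos n with rfl | hn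
  · simp
  rw [range_split n hn, Finset.sum_insert (by simp [Finset.mem_Ioo]; omega),
    Finset.sum_insert (by simp [Finset.mem_Ioo])]
  simp only [Nat.factorial_zero, Nat.sub_zero, Nat.sub_self, one_mul, mul_one]
  have hmid : n * ∑ p ∈ Ioo 0 n, p.factorial * (n - p).factorial ≤ n * n.factorial := by
    calc n * ∑ p ∈ Ioo 0 n, p.factorial * (n - p).factorial
        = ∑ p ∈ Ioo 0 n, n * (p.factorial * (n - p).factorial) := by rw [Finset.mul_sum]
      _ ≤ ∑ p ∈ Ioo 0 n, n.factorial := by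
          apply Finset.sum_le_sum
          intro p hp
          rw [Finset.mem_Ioo] at hp
          calc n * (p.factorial * (n - p).factorial)
              ≤ n.choose p * (p.factorial * (n - p).factorial) :=
                Nat.mul_le_mul_right _ (choose_lower n p hp.1 hp.2)
            _ = n.factorial := by
                rw [← mul_assoc]
                exact Nat.choose_mul_factorial_mul_factorial hp.2.le
      _ ≤ (Ioo 0 n).card * n.factorial := by rw [Finset.sum_const, smul_eq_mul]
      _ ≤ n * n.factorial := by
          apply Nat.mul_le_mul_right
          rw [Nat.card_Ioo]
          omega
  have := Nat.le_of_mul_le_mul_left hmid hn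
  omega

/-- **Corollary 2, second weight family.** With the weights `w 0 = 1`, `w n = 1/n!` for
`n ≥ 1`, the product of the algebra satisfies `‖a ∘ b‖ ≤ √3·‖a‖·‖b‖`. -/
theorem graded_norm_estimate_inv_factorial
    {E : ℕ → Type*} [∀ n, NormedAddCommGroup (E n)] [∀ n, InnerProductSpace ℝ (E n)]
    (mul : ∀ p q : ℕ, E p →ₗ[ℝ] E q →ₗ[ℝ] E (p + q))
    (hmul : ∀ p q : ℕ, 1 ≤ p → 1 ≤ q → ∀ (x : E p) (y : E q), ‖mul p q x y‖ ≤ ‖x‖ * ‖y‖)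
    (a₀ : ℝ) (a : ∀ n, E n) (ha : ∃ N, ∀ n, N ≤ n → a n = 0)
    (b₀ : ℝ) (b : ∀ n, E n) (hb : ∃ N, ∀ n, N ≤ n → b n = 0) :
    wnorm (fun n => 1 / (n.factorial : ℝ)) (a₀ * b₀) (gradedMul mul a₀ a b₀ b) ≤
      Real.sqrt 3 * wnorm (fun n => 1 / (n.factorial : ℝ)) a₀ a *
        wnorm (fun n => 1 / (n.factorial : ℝ)) b₀ b := by
  obtain ⟨Na, hA⟩ := ha
  obtain ⟨Nb, hB⟩ := hb
  set w : ℕ → ℝ := fun n => 1 / (n.factorial : ℝ) with hw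
  set c : ∀ n, E n := gradedMul mul a₀ a b₀ b with hc
  set N := Na + Nb + 1 with hN
  set A : ℕ → ℝ := fun p => if p = 0 then |a₀| else ‖a p‖ with hA'
  set B : ℕ → ℝ := fun p => if p = 0 then |b₀| else ‖b p‖ with hB'
  set C : ℕ → ℝ := fun p => if p = 0 then |a₀ * b₀| else ‖c p‖ with hC'
  have hwpos : ∀ n, 0 < w n := fun n => by
    simp only [hw]
    positivity
  have hAnn : ∀ p, 0 ≤ A p := fun p => by
    simp only [hA']; split <;> positivity
  have hBnn : ∀ p, 0 ≤ B p := fun p => by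
    simp only [hB']; split <;> positivity
  have hCnn : ∀ p, 0 ≤ C p := fun p => by
    simp only [hC']; split <;> positivity
  -- vanishing of c
  have hczero : ∀ m, Na + Nb ≤ m → c m = 0 := by
    intro m hm
    rw [hc]
    unfold gradedMul
    rw [hB m (by omega), hA m (by omega)]
    have hsum : ∀ p ∈ Ioo 0 m,
        (if h : p + (m - p) = m then cast (congrArg E h) (mul p (m - p) (a p) (b (m - p)))
          else 0) = 0 := by
      intro p hp
      rw [Finset.mem_Ioo] at hp
      have hpn : p + (m - p) = m := by omega
      rw [dif_pos hpn]
      rcases Nat.lt_or_ge p Na with hpa | hpa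
      · have : b (m - p) = 0 := hB _ (by omega)
        rw [this, map_zero]
        exact castE_zero hpn
      · have : a p = 0 := hA _ (by omega)
        rw [this, map_zero, LinearMap.zero_apply]
        exact castE_zero hpn
    rw [Finset.sum_congr rfl hsum]
    simp
  -- triangle inequality per component
  have key : ∀ n, C n ≤ ∑ p ∈ range (n + 1), A p * B (n - p) := by
    intro n
    match n with
    | 0 => simp [hA', hB', hC', abs_mul]
    | (m+1) =>
      rw [range_split (m+1) (by omega), Finset.sum_insert (by simp),
        Finset.sum_insert (by simp [Finset.mem_Ioo])]
      have e0 : A 0 * B (m + 1 - 0) = |a₀| * ‖b (m+1)‖ := by simp [hA', hB']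
      have e1 : A (m+1) * B (m + 1 - (m+1)) = ‖a (m+1)‖ * |b₀| := by simp [hA', hB']
      rw [e0, e1]
      show ‖c (m+1)‖ ≤ _
      rw [hc]
      unfold gradedMul
      refine le_trans (norm_add_le _ _) ?_
      refine le_trans (add_le_add (norm_add_le _ _) (norm_sum_le _ _)) ?_
      rw [add_assoc]
      gcongr
      · rw [norm_smul]; simp
      · rw [norm_smul]; simp [mul_comm]
      · rename_i hp
        rename' i => p
        rw [Finset.mem_Ioo] at hp
        have hpn : p + (m + 1 - p) = m + 1 := by omega
        rw [dif_pos hpn, castE_norm hpn]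
        refine le_trans (hmul p (m + 1 - p) hp.1 (by omega) (a p) (b (m + 1 - p))) ?_
        have eA : A p = ‖a p‖ := by simp only [hA', if_neg (by omega : ¬ p = 0)]
        have eB : B (m + 1 - p) = ‖b (m + 1 - p)‖ := by
          simp only [hB', if_neg (by omega : ¬ m + 1 - p = 0)]
        rw [eA, eB]
  -- weighted Cauchy-Schwarz per component
  have key2 : ∀ n, w n * C n ^ 2 ≤
      3 * ∑ p ∈ range (n + 1), (w p * A p ^ 2) * (w (n - p) * B (n - p) ^ 2) := by
    intro n
    have hCS : (∑ p ∈ range (n + 1), A p * B (n - p)) ^ 2 ≤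
        (∑ p ∈ range (n + 1), ((p.factorial : ℝ) * ((n - p).factorial : ℝ))) *
          ∑ p ∈ range (n + 1), (w p * A p ^ 2) * (w (n - p) * B (n - p) ^ 2) := by
      apply Finset.sum_sq_le_sum_mul_sum_of_sq_eq_mul
      · intro i _; positivity
      · intro i _
        have := (hwpos i).le
        have := (hwpos (n - i)).le
        have := hAnn i
        have := hBnn (n - i)
        positivity
      · intro i _
        have h1 : (i.factorial : ℝ) ≠ 0 := Nat.cast_ne_zero.mpr (Nat.factorial_ne_zero _)
        have h2 : ((n - i).factorial : ℝ) ≠ 0 := Nat.cast_ne_zero.mpr (Nat.factorial_ne_zero _)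
        simp only [hw]
        field_simp
    have hfgnn : 0 ≤ ∑ p ∈ range (n + 1), (w p * A p ^ 2) * (w (n - p) * B (n - p) ^ 2) := by
      apply Finset.sum_nonneg
      intro i _
      have := (hwpos i).le
      have := (hwpos (n - i)).le
      positivity
    have hfact : w n * (∑ p ∈ range (n + 1), ((p.factorial : ℝ) * ((n - p).factorial : ℝ))) ≤ 3 := by
      have hcast : (∑ p ∈ range (n + 1), ((p.factorial : ℝ) * ((n - p).factorial : ℝ)))
          ≤ 3 * (n.factorial : ℝ) := by exact_mod_cast factSum n
      have hnf : (0:ℝ) < (n.factorial : ℝ) := by positivity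
      calc w n * (∑ p ∈ range (n + 1), ((p.factorial : ℝ) * ((n - p).factorial : ℝ)))
          ≤ w n * (3 * (n.factorial : ℝ)) :=
            mul_le_mul_of_nonneg_left hcast (hwpos n).le
        _ = 3 := by
            simp only [hw]
            field_simp
    calc w n * C n ^ 2
        ≤ w n * ((∑ p ∈ range (n + 1), ((p.factorial : ℝ) * ((n - p).factorial : ℝ))) *
            ∑ p ∈ range (n + 1), (w p * A p ^ 2) * (w (n - p) * B (n - p) ^ 2)) := by
          apply mul_le_mul_of_nonneg_left _ (hwpos n).le
          exact le_trans (pow_le_pow_left₀ (hCnn n) (key n) 2) hCS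
      _ = (w n * (∑ p ∈ range (n + 1), ((p.factorial : ℝ) * ((n - p).factorial : ℝ)))) *
            ∑ p ∈ range (n + 1), (w p * A p ^ 2) * (w (n - p) * B (n - p) ^ 2) := by ring
      _ ≤ 3 * ∑ p ∈ range (n + 1), (w p * A p ^ 2) * (w (n - p) * B (n - p) ^ 2) :=
          mul_le_mul_of_nonneg_right hfact hfgnn
  -- rearrangement of the double sum
  have hrearr : ∑ n ∈ range (N + 1), ∑ p ∈ range (n + 1), (w p * A p ^ 2) * (w (n - p) * B (n - p) ^ 2)
      ≤ (∑ p ∈ range (N + 1), w p * A p ^ 2) * ∑ q ∈ range (N + 1), w q * B q ^ 2 := by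
    rw [Finset.sum_mul_sum]
    calc ∑ n ∈ range (N + 1), ∑ p ∈ range (n + 1), (w p * A p ^ 2) * (w (n - p) * B (n - p) ^ 2)
        = ∑ n ∈ range (N + 1), ∑ pq ∈ Finset.HasAntidiagonal.antidiagonal n,
            (w pq.1 * A pq.1 ^ 2) * (w pq.2 * B pq.2 ^ 2) := by
          refine Finset.sum_congr rfl fun n _ => ?_
          rw [Finset.Nat.sum_antidiagonal_eq_sum_range_succ_mk]
      _ = ∑ pq ∈ (range (N + 1)).biUnion (fun n => Finset.HasAntidiagonal.antidiagonal n),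
            (w pq.1 * A pq.1 ^ 2) * (w pq.2 * B pq.2 ^ 2) := by
          rw [Finset.sum_biUnion]
          intro m _ n _ hmn
          apply Finset.disjoint_left.mpr
          intro x hx1 hx2
          rw [Finset.HasAntidiagonal.mem_antidiagonal] at hx1 hx2
          exact hmn (by omega)
      _ ≤ ∑ pq ∈ (range (N + 1)) ×ˢ (range (N + 1)),
            (w pq.1 * A pq.1 ^ 2) * (w pq.2 * B pq.2 ^ 2) := by
          apply Finset.sum_le_sum_of_subset_of_nonneg
          · intro x hx
            simp only [Finset.mem_biUnion, Finset.HasAntidiagonal.mem_antidiagonal, Finset.mem_range,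
              Finset.mem_product] at *
            obtain ⟨n, hn, hxn⟩ := hx
            omega
          · intro i _ _
            have := (hwpos i.1).le
            have := (hwpos i.2).le
            positivity
      _ = ∑ p ∈ range (N + 1), ∑ q ∈ range (N + 1),
            (w p * A p ^ 2) * (w q * B q ^ 2) := Finset.sum_product _ _ _
  -- tsum evaluations
  have hta : ∑' n : ℕ, w (n + 1) * ‖a (n + 1)‖ ^ 2
      = ∑ n ∈ range N, w (n + 1) * ‖a (n + 1)‖ ^ 2 := by
    apply tsum_eq_sum
    intro n hn
    rw [Finset.mem_range, not_lt] at hn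
    rw [hA (n + 1) (by omega), norm_zero]
    ring
  have htb : ∑' n : ℕ, w (n + 1) * ‖b (n + 1)‖ ^ 2
      = ∑ n ∈ range N, w (n + 1) * ‖b (n + 1)‖ ^ 2 := by
    apply tsum_eq_sum
    intro n hn
    rw [Finset.mem_range, not_lt] at hn
    rw [hB (n + 1) (by omega), norm_zero]
    ring
  have htc : ∑' n : ℕ, w (n + 1) * ‖c (n + 1)‖ ^ 2
      = ∑ n ∈ range N, w (n + 1) * ‖c (n + 1)‖ ^ 2 := by
    apply tsum_eq_sum
    intro n hn
    rw [Finset.mem_range, not_lt] at hn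
    rw [hczero (n + 1) (by omega), norm_zero]
    ring
  -- rewriting the squared norms as single sums
  have hXa : a₀ ^ 2 + ∑ n ∈ range N, w (n + 1) * ‖a (n + 1)‖ ^ 2
      = ∑ p ∈ range (N + 1), w p * A p ^ 2 := by
    have e := Finset.sum_range_succ' (fun p => w p * A p ^ 2) N
    beta_reduce at e
    rw [e]
    have h0 : w 0 * A 0 ^ 2 = a₀ ^ 2 := by
      simp [hw, hA', sq_abs]
    rw [h0, Finset.sum_congr rfl fun i (_ : i ∈ range N) =>
      (by simp [hA'] : w (i + 1) * A (i + 1) ^ 2 = w (i + 1) * ‖a (i + 1)‖ ^ 2)]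
    ring
  have hXb : b₀ ^ 2 + ∑ n ∈ range N, w (n + 1) * ‖b (n + 1)‖ ^ 2
      = ∑ p ∈ range (N + 1), w p * B p ^ 2 := by
    have e := Finset.sum_range_succ' (fun p => w p * B p ^ 2) N
    beta_reduce at e
    rw [e]
    have h0 : w 0 * B 0 ^ 2 = b₀ ^ 2 := by
      simp [hw, hB', sq_abs]
    rw [h0, Finset.sum_congr rfl fun i (_ : i ∈ range N) =>
      (by simp [hB'] : w (i + 1) * B (i + 1) ^ 2 = w (i + 1) * ‖b (i + 1)‖ ^ 2)]
    ring
  have hXc : (a₀ * b₀) ^ 2 + ∑ n ∈ range N, w (n + 1) * ‖c (n + 1)‖ ^ 2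
      = ∑ p ∈ range (N + 1), w p * C p ^ 2 := by
    have e := Finset.sum_range_succ' (fun p => w p * C p ^ 2) N
    beta_reduce at e
    rw [e]
    have h0 : w 0 * C 0 ^ 2 = (a₀ * b₀) ^ 2 := by
      simp [hw, hC', sq_abs, mul_pow]
    rw [h0, Finset.sum_congr rfl fun i (_ : i ∈ range N) =>
      (by simp [hC'] : w (i + 1) * C (i + 1) ^ 2 = w (i + 1) * ‖c (i + 1)‖ ^ 2)]
    ring
  -- assembling
  have hmain : ∑ p ∈ range (N + 1), w p * C p ^ 2 ≤
      3 * ((∑ p ∈ range (N + 1), w p * A p ^ 2) * ∑ q ∈ range (N + 1), w q * B q ^ 2) := by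
    calc ∑ p ∈ range (N + 1), w p * C p ^ 2
        ≤ ∑ n ∈ range (N + 1), 3 * ∑ p ∈ range (n + 1),
            (w p * A p ^ 2) * (w (n - p) * B (n - p) ^ 2) :=
          Finset.sum_le_sum fun n _ => key2 n
      _ = 3 * ∑ n ∈ range (N + 1), ∑ p ∈ range (n + 1),
            (w p * A p ^ 2) * (w (n - p) * B (n - p) ^ 2) := by rw [← Finset.mul_sum]
      _ ≤ 3 * ((∑ p ∈ range (N + 1), w p * A p ^ 2) * ∑ q ∈ range (N + 1), w q * B q ^ 2) := by
          apply mul_le_mul_of_nonneg_left hrearr (by norm_num)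
  have hXann : 0 ≤ ∑ p ∈ range (N + 1), w p * A p ^ 2 :=
    Finset.sum_nonneg fun p _ => mul_nonneg (hwpos p).le (sq_nonneg _)
  have hXbnn : 0 ≤ ∑ q ∈ range (N + 1), w q * B q ^ 2 :=
    Finset.sum_nonneg fun q _ => mul_nonneg (hwpos q).le (sq_nonneg _)
  simp only [wnorm]
  rw [hta, htb, htc, hXa, hXb, hXc]
  have hrhs : Real.sqrt 3 * Real.sqrt (∑ p ∈ range (N + 1), w p * A p ^ 2) *
      Real.sqrt (∑ q ∈ range (N + 1), w q * B q ^ 2) =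
      Real.sqrt (3 * ((∑ p ∈ range (N + 1), w p * A p ^ 2) *
        ∑ q ∈ range (N + 1), w q * B q ^ 2)) := by
    rw [Real.sqrt_mul (by norm_num : (0:ℝ) ≤ 3), Real.sqrt_mul hXann, mul_assoc]
  rw [hrhs]
  exact Real.sqrt_le_sqrt hmain
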